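/- Let F(r) = r·f(r) with f(r) = (1 + exp(ε/r + ε/(r+ε) + 1))⁻¹ on (-ε, 0). Then F'(r) < 1 for all r ∈ (-ε, 0). -/

import Mathlib

open Real

theorem rf_deriv_lt_one (ε : ℝ) (hε : ε > 0)
    (f F : ℝ → ℝ)
    (hf : f = fun r : ℝ => (1 + Real.exp (ε / r + ε / (r + ε) + 1))⁻¹)
    (hF : F = fun r : ℝ => r * f r) :
    ∀ r ∈ Set.Ioo (-ε) (0:ℝ), deriv F r < 1 := by
  rintro r ⟨hr1, hr2⟩
  have hr0 : r ≠ 0 := ne_of_lt hr2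
  have hre : (0:ℝ) < r + ε := by linarith
  have hre0 : r + ε ≠ 0 := ne_of_gt hre
  set a : ℝ := ε / r + ε / (r + ε) + 1 with ha
  set x' : ℝ := ε * (-(r ^ 2)⁻¹) + ε * (-((r + ε) ^ 2)⁻¹) with hx'
  have hx1 : HasDerivAt (fun r : ℝ => ε / r) (ε * (-(r ^ 2)⁻¹)) r := by
    simpa [div_eq_mul_inv] using (hasDerivAt_inv hr0).const_mul ε
  have hx2 : HasDerivAt (fun r : ℝ => ε / (r + ε)) (ε * (-((r + ε) ^ 2)⁻¹)) r := by
    have h := (((hasDerivAt_id r).add_const ε).inv hre0).const_mul ε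
    simpa [div_eq_mul_inv] using h
  have hx : HasDerivAt (fun r : ℝ => ε / r + ε / (r + ε) + 1) x' r :=
    (hx1.add hx2).add_const 1
  have hD : HasDerivAt (fun r : ℝ => 1 + Real.exp (ε / r + ε / (r + ε) + 1))
      (Real.exp a * x') r := (hx.exp).const_add 1
  have hDpos : (0:ℝ) < 1 + Real.exp a := by positivity
  have hf' : HasDerivAt f (-(Real.exp a * x') / (1 + Real.exp a) ^ 2) r := by
    rw [hf]
    simpa [ha] using hD.fun_inv (ne_of_gt hDpos)
  have hF' : HasDerivAt F (1 * f r + r * (-(Real.exp a * x') / (1 + Real.exp a) ^ 2)) r := by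
    rw [hF]
    exact (hasDerivAt_id r).mul hf'
  rw [hF'.deriv]
  have hfr : f r = (1 + Real.exp a)⁻¹ := by rw [hf]
  have hflt : f r < 1 := by
    rw [hfr]
    rw [inv_lt_one_iff₀]
    right
    have := Real.exp_pos a
    linarith
  have hx'neg : x' < 0 := by
    have h1 : (0:ℝ) < (r ^ 2)⁻¹ := by positivity
    have h2 : (0:ℝ) < ((r + ε) ^ 2)⁻¹ := by positivity
    rw [hx']
    nlinarith
  have hterm : r * (-(Real.exp a * x') / (1 + Real.exp a) ^ 2) < 0 := by
    apply mul_neg_of_neg_of_pos hr2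
    apply div_pos
    · have := Real.exp_pos a
      nlinarith
    · positivity
  linarith
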